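/- Let i, j ∈ [n] with i ≠ j, and let a, b ∈ PB be bases of the integer polymatroid P such that a_t = b_t for every t ∈ [n] ∖ {i, j} and a_i < b_i. Then for every index k > i, if k is internally active with respect to a, then k is internally active with respect to b. -/

import Mathlib

open Finset

variable {n : ℕ}

/-- The set of bases of the integer polymatroid with rank function `f` on ground set `Fin n`:
integer vectors `a` with `a i ≥ 0`, `∑_{i ∈ I} a i ≤ f I` for every `I`, and `∑ i, a i = f [n]`.
(The upper bound `a i ≤ f {i}` used for the ambient finite set is implied by the constraints.) -/
noncomputable def PB (n : ℕ) (f : Finset (Fin n) → ℕ) : Finset (Fin n → ℤ) :=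
  (Fintype.piFinset fun i : Fin n => Finset.Icc (0 : ℤ) (f {i})).filter fun a =>
    (∀ I : Finset (Fin n), ∑ j ∈ I, a j ≤ (f I : ℤ)) ∧ ∑ j, a j = (f Finset.univ : ℤ)

/-- A set `I` is tight for `a` if `∑_{i ∈ I} a i = f I`. -/
def Tight (f : Finset (Fin n) → ℕ) (a : Fin n → ℤ) (I : Finset (Fin n)) : Prop :=
  ∑ i ∈ I, a i = (f I : ℤ)

/-- `i` is internally active with respect to `a`: `a - e_i + e_j ∉ PB` for every `j < i`. -/
def IntAct (f : Finset (Fin n) → ℕ) (a : Fin n → ℤ) (i : Fin n) : Prop :=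
  ∀ j : Fin n, j < i → a - Pi.single i 1 + Pi.single j 1 ∉ PB n f

/-- `i` is externally active with respect to `a`: `a + e_i - e_j ∉ PB` for every `j < i`. -/
def ExtAct (f : Finset (Fin n) → ℕ) (a : Fin n → ℤ) (i : Fin n) : Prop :=
  ∀ j : Fin n, j < i → a + Pi.single i 1 - Pi.single j 1 ∉ PB n f

open scoped Classical in
/-- `Int(a)`: the set of internally active indices. -/
noncomputable def IntSet (f : Finset (Fin n) → ℕ) (a : Fin n → ℤ) : Finset (Fin n) :=
  Finset.univ.filter fun i => IntAct f a i

open scoped Classical in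
/-- `Ext(a)`: the set of externally active indices. -/
noncomputable def ExtSet (f : Finset (Fin n) → ℕ) (a : Fin n → ℤ) : Finset (Fin n) :=
  Finset.univ.filter fun i => ExtAct f a i

/-- `ι(a) = |Int(a)|`, the internal activity. -/
noncomputable def iota (f : Finset (Fin n) → ℕ) (a : Fin n → ℤ) : ℕ := (IntSet f a).card

/-- `ε(a) = |Ext(a)|`, the external activity. -/
noncomputable def eps (f : Finset (Fin n) → ℕ) (a : Fin n → ℤ) : ℕ := (ExtSet f a).card


lemma mem_PB_iff {f : Finset (Fin n) → ℕ} {x : Fin n → ℤ} :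
    x ∈ PB n f ↔ (∀ t, 0 ≤ x t) ∧ (∀ I : Finset (Fin n), ∑ j ∈ I, x j ≤ (f I : ℤ)) ∧
      ∑ j, x j = (f Finset.univ : ℤ) := by
  unfold PB
  simp only [Finset.mem_filter, Fintype.mem_piFinset, Finset.mem_Icc]
  constructor
  · rintro ⟨h1, h2, h3⟩
    exact ⟨fun t => (h1 t).1, h2, h3⟩
  · rintro ⟨h1, h2, h3⟩
    refine ⟨fun t => ⟨h1 t, ?_⟩, h2, h3⟩
    have := h2 {t}
    simpa using this

lemma sum_single_ite (k : Fin n) (I : Finset (Fin n)) :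
    ∑ t ∈ I, Pi.single k (1 : ℤ) t = if k ∈ I then 1 else 0 := by
  simp [Pi.single_apply]

lemma sum_shift (a : Fin n → ℤ) (k l : Fin n) (I : Finset (Fin n)) :
    ∑ t ∈ I, (a t - (Pi.single k 1 : Fin n → ℤ) t + (Pi.single l 1 : Fin n → ℤ) t) =
      ∑ t ∈ I, a t - (if k ∈ I then 1 else 0) + (if l ∈ I then 1 else 0) := by
  rw [Finset.sum_add_distrib, Finset.sum_sub_distrib, sum_single_ite, sum_single_ite]

lemma exists_tight {f : Finset (Fin n) → ℕ} {a : Fin n → ℤ} (ha : a ∈ PB n f)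
    {k l : Fin n} (hlk : l ≠ k) (hak : 1 ≤ a k)
    (h : a - Pi.single k 1 + Pi.single l 1 ∉ PB n f) :
    ∃ I : Finset (Fin n), Tight f a I ∧ l ∈ I ∧ k ∉ I := by
  obtain ⟨h0, hle, hs⟩ := mem_PB_iff.mp ha
  by_contra hcon
  push_neg at hcon
  apply h
  rw [mem_PB_iff]
  refine ⟨?_, ?_, ?_⟩
  · intro t
    have := h0 t
    simp only [Pi.add_apply, Pi.sub_apply, Pi.single_apply]
    by_cases htk : t = k
    · subst htk
      rw [if_pos rfl, if_neg (Ne.symm hlk)]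
      linarith
    · rw [if_neg htk]
      split_ifs <;> linarith
  · intro I
    simp only [Pi.add_apply, Pi.sub_apply]
    rw [sum_shift]
    by_cases hkI : k ∈ I
    · have := hle I
      by_cases hlI : l ∈ I <;> simp [hkI, hlI] <;> linarith
    · by_cases hlI : l ∈ I
      · have h1 : ∑ j ∈ I, a j ≤ (f I : ℤ) := hle I
        have h2 : ∑ j ∈ I, a j ≠ (f I : ℤ) := fun ht => hkI (hcon I ht hlI)
        have : ∑ j ∈ I, a j < (f I : ℤ) := lt_of_le_of_ne h1 h2
        simp only [if_neg hkI, if_pos hlI]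
        omega
      · have := hle I
        simp [hkI, hlI]; linarith
  · simp only [Pi.add_apply, Pi.sub_apply]
    rw [sum_shift]
    simp [hs]

/-- If bases `a, b` agree outside `{i, j}` and `a i < b i`, then every index `k > i`
internally active for `a` is internally active for `b`. -/
theorem intAct_transfer
    (n : ℕ) (hn : 0 < n) (f : Finset (Fin n) → ℕ)
    (hf0 : f ∅ = 0)
    (hmono : ∀ I J : Finset (Fin n), I ⊆ J → f I ≤ f J)
    (hsub : ∀ I J : Finset (Fin n), f (I ∪ J) + f (I ∩ J) ≤ f I + f J)
    (i j : Fin n) (hij : i ≠ j)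
    (a b : Fin n → ℤ) (ha : a ∈ PB n f) (hb : b ∈ PB n f)
    (hagree : ∀ t : Fin n, t ≠ i → t ≠ j → a t = b t) (hi : a i < b i)
    (k : Fin n) (hk : i < k) (hka : IntAct f a k) :
    IntAct f b k := by
  intro l hlk hc
  obtain ⟨ha0, hale, has⟩ := mem_PB_iff.mp ha
  obtain ⟨hb0, hble, hbs⟩ := mem_PB_iff.mp hb
  obtain ⟨hc0, hcle, hcs⟩ := mem_PB_iff.mp hc
  set d : ℤ := b i - a i with hd_def
  have hd : 0 < d := by simp [hd_def]; linarith
  -- b j - a j = -d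
  have h0 : ∑ t, (b t - a t) = 0 := by
    rw [Finset.sum_sub_distrib, has, hbs]; ring
  have h1 : ∑ t, (b t - a t) = ∑ t ∈ ({i, j} : Finset (Fin n)), (b t - a t) := by
    refine (Finset.sum_subset (Finset.subset_univ _) ?_).symm
    intro t _ ht
    simp only [Finset.mem_insert, Finset.mem_singleton, not_or] at ht
    rw [hagree t ht.1 ht.2]; ring
  rw [h1, Finset.sum_pair hij] at h0
  have hbj : b j - a j = -d := by linarith
  -- sum relation on any set
  have hsumI : ∀ I : Finset (Fin n), ∑ t ∈ I, b t =
      ∑ t ∈ I, a t + (if i ∈ I then d else 0) - (if j ∈ I then d else 0) := by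
    intro I
    have hpt : ∀ t, b t = a t + ((if t = i then d else 0) - (if t = j then d else 0)) := by
      intro t
      by_cases hti : t = i
      · subst hti
        rw [if_pos rfl, if_neg hij]
        simp only [sub_zero, hd_def]; ring
      · by_cases htj : t = j
        · subst htj
          rw [if_neg hti, if_pos rfl]
          linarith
        · rw [if_neg hti, if_neg htj, (hagree t hti htj)]
          ring
    calc ∑ t ∈ I, b t
        = ∑ t ∈ I, (a t + ((if t = i then d else 0) - (if t = j then d else 0))) := by
          exact Finset.sum_congr rfl fun t _ => hpt t
      _ = ∑ t ∈ I, a t + (if i ∈ I then d else 0) - (if j ∈ I then d else 0) := by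
          rw [Finset.sum_add_distrib, Finset.sum_sub_distrib,
            Finset.sum_ite_eq' I i (fun _ => d), Finset.sum_ite_eq' I j (fun _ => d)]
          ring
  -- l ≠ k, k ≠ i
  have hlkne : l ≠ k := ne_of_lt hlk
  have hkine : k ≠ i := (ne_of_lt hk).symm
  -- b k ≥ 1
  have hbk : 1 ≤ b k := by
    have := hc0 k
    simp [Pi.single_apply, Ne.symm hlkne] at this
    linarith
  -- a k ≥ 1
  have hak : 1 ≤ a k := by
    by_cases hkj : k = j
    · subst hkj; linarith
    · rw [hagree k hkine hkj]; exact hbk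
  -- tight set I for a with l ∈ I, k ∉ I
  obtain ⟨I, hIt, hlI, hkI⟩ := exists_tight ha hlkne hak (hka l hlk)
  -- c's constraint on I forces j ∈ I, i ∉ I
  have hcI : ∑ t ∈ I, b t + 1 ≤ (f I : ℤ) := by
    have := hcle I
    simp only [Pi.add_apply, Pi.sub_apply] at this
    rw [sum_shift] at this
    simpa [hkI, hlI] using this
  have hIb : ∑ t ∈ I, b t < (f I : ℤ) := by linarith
  have hji : j ∈ I ∧ i ∉ I := by
    rw [hsumI I] at hIb
    rw [Tight] at hIt
    by_cases hiI : i ∈ I <;> by_cases hjI : j ∈ I <;>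
      simp [hiI, hjI] at hIb <;> first | exact ⟨hjI, hiI⟩ | linarith
  -- tight set J for a with i ∈ J, k ∉ J
  obtain ⟨J, hJt, hiJ, hkJ⟩ := exists_tight ha hkine.symm hak (hka i hk)
  -- b's constraint on J forces j ∈ J
  have hjJ : j ∈ J := by
    by_contra hjJ
    have := hble J
    rw [hsumI J, hJt] at this
    simp [hiJ, hjJ] at this
    linarith
  -- union is tight for a
  have hUt : Tight f a (I ∪ J) := by
    have hsum := Finset.sum_union_inter (s₁ := I) (s₂ := J) (f := a)
    have h1 : ∑ t ∈ I ∪ J, a t ≤ (f (I ∪ J) : ℤ) := hale _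
    have h2 : ∑ t ∈ I ∩ J, a t ≤ (f (I ∩ J) : ℤ) := hale _
    have h3 : (f (I ∪ J) : ℤ) + (f (I ∩ J) : ℤ) ≤ (f I : ℤ) + (f J : ℤ) := by
      exact_mod_cast hsub I J
    rw [Tight] at hIt hJt ⊢
    rw [hIt, hJt] at hsum
    linarith
  -- union is tight for b
  have hUb : ∑ t ∈ I ∪ J, b t = (f (I ∪ J) : ℤ) := by
    rw [hsumI (I ∪ J), hUt]
    have hiU : i ∈ I ∪ J := Finset.mem_union_right _ hiJ
    have hjU : j ∈ I ∪ J := Finset.mem_union_left _ hji.1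
    simp [hiU, hjU]
  -- contradiction with c ∈ PB
  have hkU : k ∉ I ∪ J := by
    simp only [Finset.mem_union, not_or]; exact ⟨hkI, hkJ⟩
  have hlU : l ∈ I ∪ J := Finset.mem_union_left _ hlI
  have := hcle (I ∪ J)
  simp only [Pi.add_apply, Pi.sub_apply] at this
  rw [sum_shift] at this
  simp only [if_neg hkU, if_pos hlU] at this
  rw [hUb] at this
  linarith
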